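/- Let X be a set, C a concept class on X, and H a hypothesis class with C ⊆ H ⊆ P(X). If the equivalence-query learning complexity LC^EQ(C, H) is at most d+1, then the Littlestone dimension of C is at most d. -/

import Mathlib

/-!
Definitions for query learning: concepts are total functions `X → Bool`,
partially specified subsets are functions `X → Option Bool`.
-/

/-- A total concept `f` extends the partially specified subset `A`
(i.e. agrees with `A` on its domain). -/
def PExtends {X : Type*} (f : X → Bool) (A : X → Option Bool) : Prop :=
  ∀ x b, A x = some b → f x = b

/-- `A` is `n`-consistent with `C`: every restriction of `A` of size at most `n`
has an extension in `C`. -/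
def NConsistent {X : Type*} (C : Set (X → Bool)) (A : X → Option Bool) (n : ℕ) : Prop :=
  ∀ s : Finset X, s.card ≤ n → ∃ f ∈ C, ∀ x ∈ s, ∀ b, A x = some b → f x = b

/-- `A` is finitely consistent with `C`: every finite restriction of `A`
has an extension in `C`. -/
def FinitelyConsistent {X : Type*} (C : Set (X → Bool)) (A : X → Option Bool) : Prop :=
  ∀ s : Finset X, ∃ f ∈ C, ∀ x ∈ s, ∀ b, A x = some b → f x = b

/-- There is a complete binary tree of height `d`, with internal nodes labelled by
elements of `X` (here indexed by the binary path leading to the node), whose leaves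
can each be properly labelled by a concept of `C` agreeing with the root-to-leaf path. -/
def LdimGe {X : Type*} (C : Set (X → Bool)) (d : ℕ) : Prop :=
  ∃ t : List Bool → X, ∀ σ : List Bool, σ.length = d →
    ∃ f ∈ C, ∀ k, k < d → f (t (σ.take k)) = σ.getD k false

/-- The Littlestone dimension of `C`, valued in `ℕ∞` (`⊤` = no maximum exists). -/
noncomputable def Ldim {X : Type*} (C : Set (X → Bool)) : ℕ∞ :=
  sSup {n : ℕ∞ | ∃ d : ℕ, n = d ∧ LdimGe C d}

/-- `xs` is a valid sequence of counterexamples that an adversarial teacher with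
target concept `A` can return against the learner strategy `s` (the learner's next
hypothesis is a function of the list of counterexamples received so far). -/
def ValidEQPlay {X : Type*} (A : X → Bool) (s : List X → (X → Bool)) (xs : List X) : Prop :=
  ∀ (i : ℕ) (h : i < xs.length),
    s (xs.take i) (xs.get ⟨i, h⟩) ≠ A (xs.get ⟨i, h⟩)

/-- Some learner strategy with hypotheses from `H` identifies every concept of `C`
in at most `n` equivalence queries, against every teacher. -/
def EQLearnIn {X : Type*} (C H : Set (X → Bool)) (n : ℕ) : Prop :=
  ∃ s : List X → (X → Bool), (∀ l, s l ∈ H) ∧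
    ∀ A ∈ C, ∀ xs : List X, ValidEQPlay A s xs → xs.length < n

/-- The equivalence-query learning complexity `LC^EQ(C, H)`, valued in `ℕ∞`. -/
noncomputable def LCEQ {X : Type*} (C H : Set (X → Bool)) : ℕ∞ :=
  sInf {n : ℕ∞ | ∃ m : ℕ, n = m ∧ EQLearnIn C H m}

/-- `xs` is a valid play of a teacher with target `A` against the EQ+MQ learner
strategy `s`: the history records pairs `(x, A x)`; at each step, if the learner
makes the membership query `x` the teacher answers `(x, A x)`, and if the learner
makes an equivalence query `B` the teacher returns a counterexample to `B`. -/
def ValidEMPlay {X : Type*} (A : X → Bool) (s : List (X × Bool) → X ⊕ (X → Bool))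
    (xs : List (X × Bool)) : Prop :=
  ∀ (i : ℕ) (h : i < xs.length),
    (xs.get ⟨i, h⟩).2 = A (xs.get ⟨i, h⟩).1 ∧
    (∀ x, s (xs.take i) = Sum.inl x → (xs.get ⟨i, h⟩).1 = x) ∧
    (∀ B, s (xs.take i) = Sum.inr B → B (xs.get ⟨i, h⟩).1 ≠ A (xs.get ⟨i, h⟩).1)

/-- Some learner strategy making membership queries on elements of `X` and
equivalence queries from `H` identifies every concept of `C` in at most `n`
queries in total, against every teacher. -/
def EMLearnIn {X : Type*} (C H : Set (X → Bool)) (n : ℕ) : Prop :=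
  ∃ s : List (X × Bool) → X ⊕ (X → Bool),
    (∀ l B, s l = Sum.inr B → B ∈ H) ∧
    ∀ A ∈ C, ∀ xs : List (X × Bool), ValidEMPlay A s xs → xs.length < n

/-- The EQ+MQ learning complexity `LC^{EQ+MQ}(C, H)`, valued in `ℕ∞`. -/
noncomputable def LCEM {X : Type*} (C H : Set (X → Bool)) : ℕ∞ :=
  sInf {n : ℕ∞ | ∃ m : ℕ, n = m ∧ EMLearnIn C H m}

/-- Every total function `X → Bool` that is `n`-consistent with `C` belongs to `H`. -/
def CDimLe {X : Type*} (C H : Set (X → Bool)) (n : ℕ) : Prop :=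
  ∀ A : X → Bool, NConsistent C (fun x => some (A x)) n → A ∈ H

/-- The consistency dimension `C(C, H)`, valued in `ℕ∞`. -/
noncomputable def CDim {X : Type*} (C H : Set (X → Bool)) : ℕ∞ :=
  sInf {n : ℕ∞ | ∃ m : ℕ, n = m ∧ CDimLe C H m}

/-- Every partially specified subset that is `n`-consistent with `C` has a total
extension in `H`. -/
def SCDimLe {X : Type*} (C H : Set (X → Bool)) (n : ℕ) : Prop :=
  ∀ A : X → Option Bool, NConsistent C A n → ∃ B ∈ H, PExtends B A

/-- The strong consistency dimension `SC(C, H)`, valued in `ℕ∞`. -/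
noncomputable def SCDim {X : Type*} (C H : Set (X → Bool)) : ℕ∞ :=
  sInf {n : ℕ∞ | ∃ m : ℕ, n = m ∧ SCDimLe C H m}

/-- History of counterexamples determined by a path `σ`. -/
def advHist {X : Type*} (t : List Bool → X) (σ : List Bool) : List X :=
  (List.range σ.length).map (fun j => t (σ.take j))

/-- The adversary's path of bits against learner strategy `s` on tree `t`. -/
def advSig {X : Type*} (s : List X → (X → Bool)) (t : List Bool → X) : ℕ → List Bool
  | 0 => []
  | n+1 => advSig s t n ++ [!(s (advHist t (advSig s t n)) (t (advSig s t n)))]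

theorem advSig_length {X : Type*} (s : List X → (X → Bool)) (t : List Bool → X) (n : ℕ) :
    (advSig s t n).length = n := by
  induction n with
  | zero => simp [advSig]
  | succ n ih => simp [advSig, ih]

theorem advSig_take {X : Type*} (s : List X → (X → Bool)) (t : List Bool → X)
    {k n : ℕ} (hk : k ≤ n) : (advSig s t n).take k = advSig s t k := by
  induction n with
  | zero => interval_cases k; simp [advSig]
  | succ n ih =>
    rcases Nat.lt_or_ge k (n+1) with hlt | hge
    · have hk' : k ≤ n := Nat.lt_succ_iff.mp hlt
      show (advSig s t n ++ _).take k = _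
      rw [List.take_append_of_le_length (by rw [advSig_length]; exact hk'), ih hk']
    · have : k = n + 1 := le_antisymm hk hge
      subst this
      exact List.take_of_length_le (by rw [advSig_length])

theorem advSig_getElem? {X : Type*} (s : List X → (X → Bool)) (t : List Bool → X)
    {i n : ℕ} (hi : i < n) :
    (advSig s t n)[i]? =
      some (!(s (advHist t (advSig s t i)) (t (advSig s t i)))) := by
  have h1 : ((advSig s t n).take (i+1))[i]? = (advSig s t n)[i]? := by
    rw [List.getElem?_take, if_pos (Nat.lt_succ_self i)]
  rw [advSig_take s t (Nat.succ_le_of_lt hi)] at h1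
  rw [← h1]
  show (advSig s t i ++ _)[i]? = _
  have := List.getElem?_concat_length (l := advSig s t i)
    (a := !(s (advHist t (advSig s t i)) (t (advSig s t i))))
  rwa [advSig_length] at this

theorem advHist_advSig {X : Type*} (s : List X → (X → Bool)) (t : List Bool → X) (n : ℕ) :
    advHist t (advSig s t n) = (List.range n).map (fun j => t (advSig s t j)) := by
  rw [advHist, advSig_length]
  exact List.map_congr_left (fun j hj => by
    rw [advSig_take s t (Nat.le_of_lt (List.mem_range.mp hj))])

theorem forced_play {X : Type*} (C H : Set (X → Bool)) (m e : ℕ)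
    (hL : EQLearnIn C H m) (hd : LdimGe C e) : e < m := by
  obtain ⟨s, _, hs⟩ := hL
  obtain ⟨t, ht⟩ := hd
  obtain ⟨f, hfC, hf⟩ := ht (advSig s t e) (advSig_length s t e)
  set xs : List X := (List.range e).map (fun j => t (advSig s t j)) with hxs
  have hlen : xs.length = e := by simp [hxs]
  have hvalid : ValidEQPlay f s xs := by
    intro i hi
    have hie : i < e := hlen ▸ hi
    have hget : xs.get ⟨i, hi⟩ = t (advSig s t i) := by
      simp [hxs]
    have htake : xs.take i = advHist t (advSig s t i) := by
      rw [hxs, ← List.map_take, List.take_range, Nat.min_eq_left (Nat.le_of_lt hie), advHist_advSig]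
    have hfval : f (t (advSig s t i)) =
        !(s (advHist t (advSig s t i)) (t (advSig s t i))) := by
      have := hf i hie
      rw [advSig_take s t (Nat.le_of_lt hie)] at this
      rw [this, List.getD_eq_getElem?_getD, advSig_getElem? s t hie]
      rfl
    rw [hget, htake, hfval]
    simp
  have := hs f hfC xs hvalid
  rwa [hlen] at this

theorem stmt_0 {X : Type*} (C H : Set (X → Bool)) (hCH : C ⊆ H) (d : ℕ)
    (h : LCEQ C H ≤ (d : ℕ∞) + 1) : Ldim C ≤ (d : ℕ∞) := by
  rw [Ldim]
  apply sSup_le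
  rintro n ⟨e, rfl, hLd⟩
  have key : ((e : ℕ∞) + 1 : ℕ∞) ≤ LCEQ C H := by
    rw [LCEQ]
    apply le_sInf
    rintro n ⟨m, rfl, hm⟩
    have : e < m := forced_play C H m e hm hLd
    exact_mod_cast Nat.succ_le_of_lt this
  have h2 : (e : ℕ∞) + 1 ≤ (d : ℕ∞) + 1 := key.trans h
  have h3 : ((e + 1 : ℕ) : ℕ∞) ≤ ((d + 1 : ℕ) : ℕ∞) := by
    push_cast
    exact h2
  have h4 : e + 1 ≤ d + 1 := by exact_mod_cast h3
  exact_mod_cast Nat.le_of_succ_le_succ h4
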